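/- Let Γ be a strictly Deza graph with parameters (n, k, b, a) with k = b + 1 and β(v) > 1 for every vertex v. Then for any two vertices u and v of Γ, if B[v] ∩ B[u] ≠ ∅ then B[v] = B[u]; that is, the sets B[v] form a partition of the vertex set of Γ. -/

import Mathlib

open Finset SimpleGraph

universe u v

/-- The number of common neighbours of two vertices. -/
def commonNbrs {V : Type u} [Fintype V] [DecidableEq V] (G : SimpleGraph V)
    [DecidableRel G.Adj] (x y : V) : ℕ :=
  (G.neighborFinset x ∩ G.neighborFinset y).card

/-- `G` is a Deza graph with parameters `(n, k, b, a)`: a nonempty `k`-regular graph on `n`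
vertices in which any two distinct vertices have either `b` or `a` common neighbours,
where `b ≥ a`. -/
def IsDezaGraph {V : Type u} [Fintype V] [DecidableEq V] (G : SimpleGraph V)
    [DecidableRel G.Adj] (n k b a : ℕ) : Prop :=
  G ≠ ⊥ ∧ Fintype.card V = n ∧ G.IsRegularOfDegree k ∧ a ≤ b ∧
    ∀ x y : V, x ≠ y → commonNbrs G x y = b ∨ commonNbrs G x y = a

/-- `G` is a strictly Deza graph with parameters `(n, k, b, a)`: a Deza graph of
diameter 2 that is not strongly regular. -/
def IsStrictlyDezaGraph {V : Type u} [Fintype V] [DecidableEq V] (G : SimpleGraph V)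
    [DecidableRel G.Adj] (n k b a : ℕ) : Prop :=
  IsDezaGraph G n k b a ∧ G.Connected ∧ (∀ x y : V, G.dist x y ≤ 2) ∧
    (∃ x y : V, G.dist x y = 2) ∧ ¬ ∃ ℓ μ : ℕ, G.IsSRGWith n k ℓ μ

/-- `B(v)`: the set of vertices `u ≠ v` having exactly `b` common neighbours with `v`. -/
def dezaB {V : Type u} [Fintype V] [DecidableEq V] (G : SimpleGraph V)
    [DecidableRel G.Adj] (b : ℕ) (v : V) : Finset V :=
  univ.filter fun u => u ≠ v ∧ commonNbrs G u v = b

/-- `A(v)`: the set of vertices `u ≠ v` having exactly `a` common neighbours with `v`. -/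
def dezaA {V : Type u} [Fintype V] [DecidableEq V] (G : SimpleGraph V)
    [DecidableRel G.Adj] (a : ℕ) (v : V) : Finset V :=
  univ.filter fun u => u ≠ v ∧ commonNbrs G u v = a

/-- `B[v] = B(v) ∪ {v}`. -/
def dezaBc {V : Type u} [Fintype V] [DecidableEq V] (G : SimpleGraph V)
    [DecidableRel G.Adj] (b : ℕ) (v : V) : Finset V :=
  insert v (dezaB G b v)

/-- A vertex `v` is of type (A) if `B(v) ∩ N(v) = ∅`. -/
def IsTypeA {V : Type u} [Fintype V] [DecidableEq V] (G : SimpleGraph V)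
    [DecidableRel G.Adj] (b : ℕ) (v : V) : Prop :=
  dezaB G b v ∩ G.neighborFinset v = ∅

/-- A vertex `v` is of type (B) if `B(v) ⊆ N(v)`. -/
def IsTypeB {V : Type u} [Fintype V] [DecidableEq V] (G : SimpleGraph V)
    [DecidableRel G.Adj] (b : ℕ) (v : V) : Prop :=
  dezaB G b v ⊆ G.neighborFinset v

/-- A vertex `v` is of type (C) if `|B(v) ∩ N(v)| = 1`. -/
def IsTypeC {V : Type u} [Fintype V] [DecidableEq V] (G : SimpleGraph V)
    [DecidableRel G.Adj] (b : ℕ) (v : V) : Prop :=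
  (dezaB G b v ∩ G.neighborFinset v).card = 1

/-- A vertex `x` of type (A) is of type (A1) if there exists `y ∈ N(x)` with
`N(x) \ N(xᵢ) = {y}` for every `xᵢ ∈ B(x)`. -/
def IsTypeA1 {V : Type u} [Fintype V] [DecidableEq V] (G : SimpleGraph V)
    [DecidableRel G.Adj] (b : ℕ) (x : V) : Prop :=
  IsTypeA G b x ∧ ∃ y ∈ G.neighborFinset x,
    ∀ xi ∈ dezaB G b x, G.neighborFinset x \ G.neighborFinset xi = {y}

/-- A vertex `x` of type (A) is of type (A2) if there exists `z ∉ N[x]` with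
`N(xᵢ) \ N(x) = {z}` for every `xᵢ ∈ B(x)`. -/
def IsTypeA2 {V : Type u} [Fintype V] [DecidableEq V] (G : SimpleGraph V)
    [DecidableRel G.Adj] (b : ℕ) (x : V) : Prop :=
  IsTypeA G b x ∧ ∃ z ∉ insert x (G.neighborFinset x),
    ∀ xi ∈ dezaB G b x, G.neighborFinset xi \ G.neighborFinset x = {z}

/-- The complete multipartite graph with `m` parts of size `t`. -/
def completeMultipartiteGr (m t : ℕ) : SimpleGraph (Fin m × Fin t) where
  Adj u v := u.1 ≠ v.1
  symm := ⟨fun _ _ h => Ne.symm h⟩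
  loopless := ⟨fun _ h => h rfl⟩

/-- The 2-clique extension of a graph `H`: vertices `(u, i)` and `(v, j)` are adjacent
iff `u ~ v` in `H`, or `u = v` and `i ≠ j`. -/
def cliqueExt2 {W : Type v} (H : SimpleGraph W) : SimpleGraph (W × Fin 2) where
  Adj u v := H.Adj u.1 v.1 ∨ (u.1 = v.1 ∧ u.2 ≠ v.2)
  symm := by
    constructor
    intro u v h
    rcases h with h | ⟨h1, h2⟩
    · exact Or.inl h.symm
    · exact Or.inr ⟨h1.symm, h2.symm⟩
  loopless := by
    constructor
    intro u h
    rcases h with h | ⟨_, h2⟩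
    · exact H.irrefl h
    · exact h2 rfl

section Aux
variable {V : Type u} [Fintype V] [DecidableEq V] (G : SimpleGraph V) [DecidableRel G.Adj]

lemma commonNbrs_comm (x y : V) : commonNbrs G x y = commonNbrs G y x := by
  rw [commonNbrs, commonNbrs, Finset.inter_comm]

lemma card_commonNeighbors_eq (x y : V) :
    Fintype.card (G.commonNeighbors x y) = commonNbrs G x y := by
  rw [commonNbrs, ← Set.toFinset_card]
  congr 1
  ext z
  simp [SimpleGraph.mem_commonNeighbors, SimpleGraph.mem_neighborFinset]

omit [Fintype V] [DecidableEq V] [DecidableRel G.Adj] in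
lemma walk_cases_of_len_le_two {u r : V} (p : G.Walk u r) (h : p.length ≤ 2) :
    u = r ∨ G.Adj u r ∨ ∃ m, G.Adj u m ∧ G.Adj m r := by
  cases p with
  | nil => exact Or.inl rfl
  | cons h1 q =>
    cases q with
    | nil => exact Or.inr (Or.inl h1)
    | cons h2 q2 =>
      cases q2 with
      | nil => exact Or.inr (Or.inr ⟨_, h1, h2⟩)
      | cons h3 q3 => simp [SimpleGraph.Walk.length_cons] at h

omit [Fintype V] in
lemma sdiff_eq_singleton {s t : Finset V} {b : ℕ} {c : V} (hs : s.card = b + 1)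
    (hst : (s ∩ t).card = b) (hc : c ∈ s) (hc' : c ∉ t) : s \ t = {c} := by
  have h1 := Finset.card_inter_add_card_sdiff s t
  rw [hs, hst] at h1
  have h2 : (s \ t).card = 1 := by omega
  obtain ⟨d, hd⟩ := Finset.card_eq_one.mp h2
  have : c ∈ s \ t := Finset.mem_sdiff.mpr ⟨hc, hc'⟩
  rw [hd] at this
  rw [hd, Finset.mem_singleton.mp this]

variable {G}

/-- In the degree-2 case, a Deza graph with `b = 1`, `a = 0`, connected with diameter 2,
would be strongly regular with parameters `(n, 2, 0, 1)`. -/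
lemma srg_of_deg_two (n : ℕ) (hn : Fintype.card V = n) (hreg : G.IsRegularOfDegree 2)
    (hdez : ∀ x y : V, x ≠ y → commonNbrs G x y = 1 ∨ commonNbrs G x y = 0)
    (hconn : G.Connected) (hdiam : ∀ x y : V, G.dist x y ≤ 2)
    (hd2 : ∃ x y : V, G.dist x y = 2) : G.IsSRGWith n 2 0 1 := by
  have hcard : ∀ v : V, (G.neighborFinset v).card = 2 := fun v => hreg v
  -- every adjacent pair has 0 common neighbours
  have hadj0 : ∀ v t : V, G.Adj v t → commonNbrs G v t = 0 := by
    intro v t hvt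
    rcases hdez v t hvt.ne with h1 | h0
    · -- closed twins: component is a triangle, contradicting the existence of a dist-2 pair
      exfalso
      have htv : t ∈ G.neighborFinset v := (G.mem_neighborFinset v t).mpr hvt
      have hvt' : v ∈ G.neighborFinset t := (G.mem_neighborFinset t v).mpr hvt.symm
      obtain ⟨s, hs⟩ := Finset.card_eq_one.mp h1
      have hs' : s ∈ G.neighborFinset v ∩ G.neighborFinset t := by
        rw [hs]; exact Finset.mem_singleton_self s
      have hsv : s ∈ G.neighborFinset v := (Finset.mem_inter.mp hs').1
      have hst : s ∈ G.neighborFinset t := (Finset.mem_inter.mp hs').2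
      have hsnev : s ≠ v := fun h => G.notMem_neighborFinset_self v (h ▸ hsv)
      have hsnet : s ≠ t := fun h => G.notMem_neighborFinset_self t (h ▸ hst)
      have hNv : G.neighborFinset v = {s, t} := by
        apply (Finset.eq_of_subset_of_card_le _ _).symm
        · intro z hz
          simp only [Finset.mem_insert, Finset.mem_singleton] at hz
          rcases hz with rfl | rfl
          · exact hsv
          · exact htv
        · rw [hcard v, Finset.card_insert_of_notMem (by simpa using hsnet),
            Finset.card_singleton]
      have hNt : G.neighborFinset t = {s, v} := by
        apply (Finset.eq_of_subset_of_card_le _ _).symm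
        · intro z hz
          simp only [Finset.mem_insert, Finset.mem_singleton] at hz
          rcases hz with rfl | rfl
          · exact hst
          · exact hvt'
        · rw [hcard t, Finset.card_insert_of_notMem (by simpa using hsnev),
            Finset.card_singleton]
      have hNs : G.neighborFinset s = {v, t} := by
        apply (Finset.eq_of_subset_of_card_le _ _).symm
        · intro z hz
          simp only [Finset.mem_insert, Finset.mem_singleton] at hz
          rcases hz with rfl | rfl
          · exact (G.mem_neighborFinset s z).mpr ((G.mem_neighborFinset z s).mp hsv).symm
          · exact (G.mem_neighborFinset s z).mpr ((G.mem_neighborFinset z s).mp hst).symm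
        · rw [hcard s, Finset.card_insert_of_notMem (by simpa using hvt.ne),
            Finset.card_singleton]
      have hmemN : ∀ m r' : V, G.Adj m r' → m = v ∨ m = s ∨ m = t →
          r' = v ∨ r' = s ∨ r' = t := by
        intro m r' hmr' hm
        have hr' : r' ∈ G.neighborFinset m := (G.mem_neighborFinset m r').mpr hmr'
        rcases hm with rfl | rfl | rfl
        · rw [hNv] at hr'
          simp only [Finset.mem_insert, Finset.mem_singleton] at hr'
          tauto
        · rw [hNs] at hr'
          simp only [Finset.mem_insert, Finset.mem_singleton] at hr'
          tauto
        · rw [hNt] at hr'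
          simp only [Finset.mem_insert, Finset.mem_singleton] at hr'
          tauto
      have hmem : ∀ r : V, r = v ∨ r = s ∨ r = t := by
        intro r
        obtain ⟨p, hp⟩ := hconn.exists_walk_length_eq_dist v r
        have hlen : p.length ≤ 2 := hp ▸ hdiam v r
        rcases walk_cases_of_len_le_two G p hlen with h | h | ⟨m, h1, h2⟩
        · exact Or.inl h.symm
        · exact hmemN v r h (Or.inl rfl)
        · exact hmemN m r h2 (hmemN v m h1 (Or.inl rfl))
      obtain ⟨α, β, hαβ⟩ := hd2
      have hne : α ≠ β := by rintro rfl; rw [SimpleGraph.dist_self] at hαβ; omega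
      have hadjall : G.Adj α β := by
        have hadj_vs : G.Adj v s := (G.mem_neighborFinset v s).mp hsv
        have hadj_st : G.Adj s t := ((G.mem_neighborFinset t s).mp hst).symm
        rcases hmem α with rfl | rfl | rfl <;> rcases hmem β with rfl | rfl | rfl <;>
          first
          | exact absurd rfl hne
          | assumption
          | exact hadj_vs.symm
          | exact hvt.symm
          | exact hadj_st.symm
      rw [SimpleGraph.dist_eq_one_iff_adj.mpr hadjall] at hαβ
      omega
    · exact h0
  -- every nonadjacent distinct pair has exactly 1 common neighbour
  have hnadj1 : ∀ v t : V, v ≠ t → ¬G.Adj v t → commonNbrs G v t = 1 := by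
    intro v t hne hnadj
    rcases hdez v t hne with h1 | h0
    · exact h1
    · exfalso
      obtain ⟨p, hp⟩ := hconn.exists_walk_length_eq_dist v t
      have hlen : p.length ≤ 2 := hp ▸ hdiam v t
      rcases walk_cases_of_len_le_two G p hlen with h | h | ⟨m, h1, h2⟩
      · exact hne h
      · exact hnadj h
      · have hm : m ∈ G.neighborFinset v ∩ G.neighborFinset t :=
          Finset.mem_inter.mpr ⟨(G.mem_neighborFinset v m).mpr h1,
            (G.mem_neighborFinset t m).mpr h2.symm⟩
        have hpos := Finset.card_pos.mpr ⟨m, hm⟩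
        rw [show (G.neighborFinset v ∩ G.neighborFinset t).card = commonNbrs G v t from rfl,
          h0] at hpos
        omega
  refine ⟨hn, hreg, ?_, fun v w => ?_⟩
  · intro v w hvw
    rw [card_commonNeighbors_eq]
    exact hadj0 v w hvw
  · intro hne hnadj
    rw [card_commonNeighbors_eq]
    exact hnadj1 v w hne hnadj

end Aux

section Euclid
variable {V : Type u} [Fintype V] [DecidableEq V] {G : SimpleGraph V} [DecidableRel G.Adj]

/-- Key lemma: in a strictly Deza graph with `k = b + 1`, if `u` and `w` are both in `B(x)`,
then they have `b` common neighbours. -/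
lemma euclid_B (n b a : ℕ) (hn : Fintype.card V = n) (hreg : G.IsRegularOfDegree (b + 1))
    (hab : a < b)
    (hdez : ∀ x y : V, x ≠ y → commonNbrs G x y = b ∨ commonNbrs G x y = a)
    (hconn : G.Connected) (hdiam : ∀ x y : V, G.dist x y ≤ 2)
    (hd2 : ∃ x y : V, G.dist x y = 2)
    (hnsrg : ¬∃ ℓ μ : ℕ, G.IsSRGWith n (b + 1) ℓ μ) :
    ∀ x u w : V, u ≠ x → w ≠ x → u ≠ w → commonNbrs G u x = b → commonNbrs G w x = b →
      commonNbrs G u w = b := by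
  have hcard : ∀ v : V, (G.neighborFinset v).card = b + 1 := fun v => hreg v
  -- mixed case helper: u adjacent to x, w not adjacent to x
  have mixed : ∀ x u w : V, u ≠ x → w ≠ x → u ≠ w → commonNbrs G u x = b →
      commonNbrs G w x = b → G.Adj x u → ¬G.Adj x w →
      (G.neighborFinset x \ {u}) ⊆ G.neighborFinset u ∩ G.neighborFinset w := by
    intro x u w hux hwx huw hbu hbw hadj hnadj
    have hux' : u ∈ G.neighborFinset x := (G.mem_neighborFinset x u).mpr hadj
    have hxu' : x ∈ G.neighborFinset u := (G.mem_neighborFinset u x).mpr hadj.symm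
    -- N(x) \ N(u) = {u}
    have h1 : G.neighborFinset x \ G.neighborFinset u = {u} := by
      apply sdiff_eq_singleton (hcard x) _ hux' (G.notMem_neighborFinset_self u)
      rw [Finset.inter_comm]; exact hbu
    -- N(u) \ N(x) = {x}
    have h2 : G.neighborFinset u \ G.neighborFinset x = {x} :=
      sdiff_eq_singleton (hcard u) hbu hxu' (G.notMem_neighborFinset_self x)
    -- u ∉ N(w)
    have hunw : u ∉ G.neighborFinset w := by
      intro hmem
      have hwu : w ∈ G.neighborFinset u :=
        (G.mem_neighborFinset u w).mpr ((G.mem_neighborFinset w u).mp hmem).symm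
      have hwnx : w ∉ G.neighborFinset x := fun hc => hnadj ((G.mem_neighborFinset x w).mp hc)
      have : w ∈ G.neighborFinset u \ G.neighborFinset x := Finset.mem_sdiff.mpr ⟨hwu, hwnx⟩
      rw [h2, Finset.mem_singleton] at this
      exact hwx this
    -- N(x) \ N(w) = {u}
    have h3 : G.neighborFinset x \ G.neighborFinset w = {u} := by
      apply sdiff_eq_singleton (hcard x) _ hux' hunw
      rw [Finset.inter_comm]; exact hbw
    intro z hz
    obtain ⟨hzx, hzu⟩ := Finset.mem_sdiff.mp hz
    rw [Finset.mem_singleton] at hzu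
    refine Finset.mem_inter.mpr ⟨?_, ?_⟩
    · by_contra hc
      have : z ∈ G.neighborFinset x \ G.neighborFinset u := Finset.mem_sdiff.mpr ⟨hzx, hc⟩
      rw [h1, Finset.mem_singleton] at this
      exact hzu this
    · by_contra hc
      have : z ∈ G.neighborFinset x \ G.neighborFinset w := Finset.mem_sdiff.mpr ⟨hzx, hc⟩
      rw [h3, Finset.mem_singleton] at this
      exact hzu this
  intro x u w hux hwx huw hbu hbw
  rcases hdez u w huw with hb | ha
  · exact hb
  exfalso
  -- common neighbours of u and w number `a < b`
  by_cases hadju : G.Adj x u <;> by_cases hadjw : G.Adj x w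
  · -- both adjacent: N(u) ∩ N(w) ⊇ (N(x) \ {u, w}) ∪ {x}, of size b
    have hux' : u ∈ G.neighborFinset x := (G.mem_neighborFinset x u).mpr hadju
    have hwx' : w ∈ G.neighborFinset x := (G.mem_neighborFinset x w).mpr hadjw
    have h1 : G.neighborFinset x \ G.neighborFinset u = {u} := by
      apply sdiff_eq_singleton (hcard x) _ hux' (G.notMem_neighborFinset_self u)
      rw [Finset.inter_comm]; exact hbu
    have h2 : G.neighborFinset x \ G.neighborFinset w = {w} := by
      apply sdiff_eq_singleton (hcard x) _ hwx' (G.notMem_neighborFinset_self w)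
      rw [Finset.inter_comm]; exact hbw
    have hsub : insert x (G.neighborFinset x \ {u, w}) ⊆
        G.neighborFinset u ∩ G.neighborFinset w := by
      intro z hz
      rcases Finset.mem_insert.mp hz with rfl | hz
      · exact Finset.mem_inter.mpr ⟨(G.mem_neighborFinset u z).mpr hadju.symm,
          (G.mem_neighborFinset w z).mpr hadjw.symm⟩
      · obtain ⟨hzx, hzuw⟩ := Finset.mem_sdiff.mp hz
        simp only [Finset.mem_insert, Finset.mem_singleton, not_or] at hzuw
        refine Finset.mem_inter.mpr ⟨?_, ?_⟩
        · by_contra hc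
          have : z ∈ G.neighborFinset x \ G.neighborFinset u := Finset.mem_sdiff.mpr ⟨hzx, hc⟩
          rw [h1, Finset.mem_singleton] at this
          exact hzuw.1 this
        · by_contra hc
          have : z ∈ G.neighborFinset x \ G.neighborFinset w := Finset.mem_sdiff.mpr ⟨hzx, hc⟩
          rw [h2, Finset.mem_singleton] at this
          exact hzuw.2 this
    have hcard1 : (insert x (G.neighborFinset x \ {u, w})).card = b := by
      rw [Finset.card_insert_of_notMem (fun hc =>
        G.notMem_neighborFinset_self x (Finset.mem_sdiff.mp hc).1)]
      rw [Finset.card_sdiff_of_subset (by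
        intro z hz
        simp only [Finset.mem_insert, Finset.mem_singleton] at hz
        rcases hz with rfl | rfl
        · exact hux'
        · exact hwx')]
      rw [hcard x, Finset.card_insert_of_notMem (by simpa using huw), Finset.card_singleton]
      omega
    have := Finset.card_le_card hsub
    rw [hcard1] at this
    rw [show (G.neighborFinset u ∩ G.neighborFinset w).card = commonNbrs G u w from rfl, ha]
      at this
    omega
  · -- u adjacent, w not
    have hsub := mixed x u w hux hwx huw hbu hbw hadju hadjw
    have := Finset.card_le_card hsub
    rw [Finset.card_sdiff_of_subset (Finset.singleton_subset_iff.mpr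
      ((G.mem_neighborFinset x u).mpr hadju)), hcard x, Finset.card_singleton] at this
    rw [show (G.neighborFinset u ∩ G.neighborFinset w).card = commonNbrs G u w from rfl, ha]
      at this
    omega
  · -- w adjacent, u not
    have hsub := mixed x w u hwx hux huw.symm hbw hbu hadjw hadju
    have := Finset.card_le_card hsub
    rw [Finset.card_sdiff_of_subset (Finset.singleton_subset_iff.mpr
      ((G.mem_neighborFinset x w).mpr hadjw)), hcard x, Finset.card_singleton] at this
    rw [Finset.inter_comm] at this
    rw [show (G.neighborFinset u ∩ G.neighborFinset w).card = commonNbrs G u w from rfl, ha]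
      at this
    omega
  · -- neither adjacent
    have hun : u ∉ G.neighborFinset x := fun hc => hadju ((G.mem_neighborFinset x u).mp hc)
    have hwn : w ∉ G.neighborFinset x := fun hc => hadjw ((G.mem_neighborFinset x w).mp hc)
    -- N(x) \ N(u) = {p1}, N(x) \ N(w) = {p2}
    have hc1 : (G.neighborFinset x \ G.neighborFinset u).card = 1 := by
      have h := Finset.card_inter_add_card_sdiff (G.neighborFinset x) (G.neighborFinset u)
      rw [hcard x, Finset.inter_comm, show (G.neighborFinset u ∩ G.neighborFinset x).card =
        commonNbrs G u x from rfl, hbu] at h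
      omega
    have hc2 : (G.neighborFinset x \ G.neighborFinset w).card = 1 := by
      have h := Finset.card_inter_add_card_sdiff (G.neighborFinset x) (G.neighborFinset w)
      rw [hcard x, Finset.inter_comm, show (G.neighborFinset w ∩ G.neighborFinset x).card =
        commonNbrs G w x from rfl, hbw] at h
      omega
    obtain ⟨p1, hp1⟩ := Finset.card_eq_one.mp hc1
    obtain ⟨p2, hp2⟩ := Finset.card_eq_one.mp hc2
    have hsub : G.neighborFinset x \ {p1, p2} ⊆ G.neighborFinset u ∩ G.neighborFinset w := by
      intro z hz
      obtain ⟨hzx, hzp⟩ := Finset.mem_sdiff.mp hz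
      simp only [Finset.mem_insert, Finset.mem_singleton, not_or] at hzp
      refine Finset.mem_inter.mpr ⟨?_, ?_⟩
      · by_contra hc
        have : z ∈ G.neighborFinset x \ G.neighborFinset u := Finset.mem_sdiff.mpr ⟨hzx, hc⟩
        rw [hp1, Finset.mem_singleton] at this
        exact hzp.1 this
      · by_contra hc
        have : z ∈ G.neighborFinset x \ G.neighborFinset w := Finset.mem_sdiff.mpr ⟨hzx, hc⟩
        rw [hp2, Finset.mem_singleton] at this
        exact hzp.2 this
    -- k ≤ a + 2
    have hka : b + 1 ≤ a + 2 := by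
      have hsub2 : G.neighborFinset x ⊆ (G.neighborFinset x \ {p1, p2}) ∪ {p1, p2} := by
        intro z hz
        by_cases hzp : z ∈ ({p1, p2} : Finset V)
        · exact Finset.mem_union_right _ hzp
        · exact Finset.mem_union_left _ (Finset.mem_sdiff.mpr ⟨hz, hzp⟩)
      have h4 := Finset.card_le_card hsub2
      have h5 := Finset.card_union_le (G.neighborFinset x \ {p1, p2}) ({p1, p2} : Finset V)
      have h6 : ({p1, p2} : Finset V).card ≤ 2 :=
        le_trans (Finset.card_insert_le _ _) (by simp)
      have h7 := Finset.card_le_card hsub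
      rw [show (G.neighborFinset u ∩ G.neighborFinset w).card = commonNbrs G u w from rfl, ha]
        at h7
      rw [hcard x] at h4
      omega
    by_cases hb1 : b = 1
    · -- degree-2 case: graph would be strongly regular (n, 2, 0, 1)
      subst hb1
      have ha0 : a = 0 := by omega
      subst ha0
      exact hnsrg ⟨0, 1, srg_of_deg_two n hn hreg hdez hconn hdiam hd2⟩
    · -- b ≥ 2: find z ∈ N(x) ∩ N(u) ∩ N(w); then x, u, w are three neighbours of z
      -- outside N(x), but z has at most 2 neighbours outside N(x).
      have hb2 : 2 ≤ b := by omega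
      have hzcard : 1 ≤ (G.neighborFinset x \ {p1, p2}).card := by
        have hsub2 : G.neighborFinset x ⊆ (G.neighborFinset x \ {p1, p2}) ∪ {p1, p2} := by
          intro z hz
          by_cases hzp : z ∈ ({p1, p2} : Finset V)
          · exact Finset.mem_union_right _ hzp
          · exact Finset.mem_union_left _ (Finset.mem_sdiff.mpr ⟨hz, hzp⟩)
        have h4 := Finset.card_le_card hsub2
        have h5 := Finset.card_union_le (G.neighborFinset x \ {p1, p2}) ({p1, p2} : Finset V)
        have h6 : ({p1, p2} : Finset V).card ≤ 2 :=
          le_trans (Finset.card_insert_le _ _) (by simp)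
        rw [hcard x] at h4
        omega
      obtain ⟨z, hz⟩ := Finset.card_pos.mp (lt_of_lt_of_le zero_lt_one hzcard)
      have hzin := hsub hz
      have hzx : z ∈ G.neighborFinset x := (Finset.mem_sdiff.mp hz).1
      have hzu : z ∈ G.neighborFinset u := (Finset.mem_inter.mp hzin).1
      have hzw : z ∈ G.neighborFinset w := (Finset.mem_inter.mp hzin).2
      have hznx : z ≠ x := fun h => G.notMem_neighborFinset_self x (h ▸ hzx)
      -- {x, u, w} ⊆ N(z) \ N(x)
      have hxyz : ({x, u, w} : Finset V) ⊆ G.neighborFinset z \ G.neighborFinset x := by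
        intro r hr
        simp only [Finset.mem_insert, Finset.mem_singleton] at hr
        rcases hr with rfl | rfl | rfl
        · exact Finset.mem_sdiff.mpr ⟨(G.mem_neighborFinset z r).mpr
            ((G.mem_neighborFinset r z).mp hzx).symm, G.notMem_neighborFinset_self r⟩
        · exact Finset.mem_sdiff.mpr ⟨(G.mem_neighborFinset z r).mpr
            ((G.mem_neighborFinset r z).mp hzu).symm, hun⟩
        · exact Finset.mem_sdiff.mpr ⟨(G.mem_neighborFinset z r).mpr
            ((G.mem_neighborFinset r z).mp hzw).symm, hwn⟩
      have hcard3 : ({x, u, w} : Finset V).card = 3 := by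
        rw [Finset.card_insert_of_notMem (by simp [Ne.symm hux, Ne.symm hwx]),
          Finset.card_insert_of_notMem (by simpa using huw), Finset.card_singleton]
      have h8 := Finset.card_le_card hxyz
      rw [hcard3] at h8
      have h9 := Finset.card_inter_add_card_sdiff (G.neighborFinset z) (G.neighborFinset x)
      rw [hcard z] at h9
      have h10 : commonNbrs G z x = b ∨ commonNbrs G z x = a := hdez z x hznx
      rw [show (G.neighborFinset z ∩ G.neighborFinset x).card = commonNbrs G z x from rfl]
        at h9
      omega

end Euclid

theorem stmt14 {V : Type u} [Fintype V] [DecidableEq V] (G : SimpleGraph V)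
    [DecidableRel G.Adj] (n k b a : ℕ)
    (hG : IsStrictlyDezaGraph G n k b a) (hk : k = b + 1)
    (hβ : ∀ v : V, 1 < (dezaB G b v).card) :
    ∀ x y : V, (dezaBc G b x ∩ dezaBc G b y).Nonempty →
      dezaBc G b x = dezaBc G b y := by
  obtain ⟨⟨hGne, hn, hreg, hab, hdez⟩, hconn, hdiam, hd2, hnsrg⟩ := hG
  subst hk
  have hcard : ∀ v : V, (G.neighborFinset v).card = b + 1 := fun v => hreg v
  have hab' : a < b := by
    rcases lt_or_eq_of_le hab with h | h
    · exact h
    · exfalso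
      refine hnsrg ⟨b, b, hn, hreg, fun v w hadj => ?_, fun v w hvw hnadj => ?_⟩
      · rw [card_commonNeighbors_eq]
        rcases hdez v w hadj.ne with hh | hh <;> omega
      · rw [card_commonNeighbors_eq]
        rcases hdez v w hvw with hh | hh <;> omega
  have key := euclid_B n b a hn hreg hab' hdez hconn hdiam hd2 hnsrg
  have hmemBc : ∀ s t : V, s ∈ dezaBc G b t ↔ (s = t ∨ commonNbrs G s t = b) := by
    intro s t
    unfold dezaBc dezaB
    simp only [Finset.mem_insert, Finset.mem_filter, Finset.mem_univ, true_and]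
    constructor
    · rintro (rfl | ⟨hst, hc⟩)
      · exact Or.inl rfl
      · exact Or.inr hc
    · rintro (rfl | hc)
      · exact Or.inl rfl
      · by_cases hst : s = t
        · exact Or.inl hst
        · exact Or.inr ⟨hst, hc⟩
  have hself : ∀ s : V, commonNbrs G s s ≠ b := by
    intro s h
    rw [commonNbrs, Finset.inter_self, hcard s] at h
    omega
  have hsymm : ∀ s t : V, (s = t ∨ commonNbrs G s t = b) →
      (t = s ∨ commonNbrs G t s = b) := by
    intro s t h
    rcases h with rfl | h
    · exact Or.inl rfl
    · exact Or.inr (by rwa [commonNbrs_comm])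
  have heuc : ∀ c s t : V, (s = c ∨ commonNbrs G s c = b) →
      (t = c ∨ commonNbrs G t c = b) → (s = t ∨ commonNbrs G s t = b) := by
    intro c s t hs ht
    by_cases hst : s = t
    · exact Or.inl hst
    rcases hs with rfl | hs
    · exact hsymm t s ht
    rcases ht with rfl | ht
    · exact Or.inr hs
    · have hsc : s ≠ c := fun h => hself c (by rwa [h] at hs)
      have htc : t ≠ c := fun h => hself c (by rwa [h] at ht)
      exact Or.inr (key c s t hsc htc hst hs ht)
  intro x y hne
  obtain ⟨z, hz⟩ := hne
  rw [Finset.mem_inter] at hz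
  have hzx : z = x ∨ commonNbrs G z x = b := (hmemBc z x).mp hz.1
  have hzy : z = y ∨ commonNbrs G z y = b := (hmemBc z y).mp hz.2
  apply Finset.ext
  intro t
  rw [hmemBc t x, hmemBc t y]
  constructor
  · intro htx
    exact heuc z t y (heuc x t z htx hzx) (hsymm z y hzy)
  · intro hty
    exact heuc z t x (heuc y t z hty hzy) (hsymm z x hzx)
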